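/- Let $\mathbb{U}$ be the unit disk and let $r_0 \in (0,1)$, $\Theta \in [0, \pi)$. Consider a generalized cycle $C$ of Euclidean radius $r$ meeting the circle $C_0 = C(0, r_0)$ at angle $\Theta$, so its center is at distance $d = \sqrt{r_0^2 + r^2 + 2 r_0 r \cos\Theta}$ from the origin. Then: (i) $C$ is a hyperbolic circle iff $d < 1 - r$; (ii) $C$ is a horocycle (tangent internally to $\partial\mathbb{U}$) iff $d = 1 - r$; (iii) $C$ is a hypercycle (meets $\partial\mathbb{U}$ in two points) iff $1 - r < d < 1 + r$. Moreover, as $r$ ranges over $(0, \infty)$ with $d = d(r)$ as above, the geodesic curvature $g(r)$ (defined piecewise as $\coth$ of hyperbolic radius, $1$, or $-\cos$ of the boundary intersection angle) is a continuous strictly decreasing function of $r$. -/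

import Mathlib

open Real Metric

set_option maxHeartbeats 1000000

local notation "E2" => EuclideanSpace ℝ (Fin 2)


theorem memsph (z w : E2) (ρ : ℝ) (hρ : 0 ≤ ρ) :
    z ∈ sphere w ρ ↔ (z 0 - w 0)^2 + (z 1 - w 1)^2 = ρ^2 := by
  rw [mem_sphere, EuclideanSpace.dist_eq, Fin.sum_univ_two]
  simp only [Real.dist_eq, sq_abs]
  constructor
  · intro h
    have h0 : 0 ≤ (z 0 - w 0)^2 + (z 1 - w 1)^2 := by positivity
    nlinarith [Real.sq_sqrt h0]
  · intro h
    rw [h, Real.sqrt_sq hρ]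

theorem memsph0 (z : E2) : z ∈ sphere (0 : E2) 1 ↔ z 0^2 + z 1^2 = 1 := by
  rw [memsph z 0 1 (by norm_num)]
  have h0 : (0 : E2) 0 = 0 := rfl
  have h1 : (0 : E2) 1 = 0 := rfl
  rw [h0, h1]
  norm_num

theorem normsq2 (c : E2) : c 0^2 + c 1^2 = ‖c‖^2 := by
  rw [EuclideanSpace.norm_eq, Fin.sum_univ_two, Real.sq_sqrt (by positivity)]
  simp [sq_abs]

theorem tangent_inter (c : E2) (D r : ℝ) (hD : 0 < D) (hr : 0 < r) (hc : ‖c‖ = D)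
    (h : D = 1 - r) : sphere c r ∩ sphere (0 : E2) 1 = {D⁻¹ • c} := by
  have hD2 : c 0^2 + c 1^2 = D^2 := by rw [normsq2, hc]
  ext z
  simp only [Set.mem_inter_iff, Set.mem_singleton_iff, memsph z c r hr.le, memsph0]
  constructor
  · rintro ⟨h1, h2⟩
    have key : z 0 * c 0 + z 1 * c 1 = D := by nlinarith
    have e0 : (D * z 0 - c 0)^2 + (D * z 1 - c 1)^2 = 0 := by nlinarith
    have e1 : D * z 0 - c 0 = 0 := by nlinarith [sq_nonneg (D * z 0 - c 0), sq_nonneg (D * z 1 - c 1)]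
    have e2 : D * z 1 - c 1 = 0 := by nlinarith [sq_nonneg (D * z 0 - c 0), sq_nonneg (D * z 1 - c 1)]
    ext i
    fin_cases i
    · show z 0 = (D⁻¹ • c) 0
      simp only [PiLp.smul_apply, smul_eq_mul]
      field_simp
      linarith
    · show z 1 = (D⁻¹ • c) 1
      simp only [PiLp.smul_apply, smul_eq_mul]
      field_simp
      linarith
  · intro hz
    subst hz
    simp only [PiLp.smul_apply, smul_eq_mul]
    constructor
    · field_simp
      linear_combination (1-D)^2 * hD2 - (1-D+r)*D^2 * h
    · field_simp
      linear_combination hD2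

theorem mem_both (c : E2) (D r k t : ℝ) (hD : 0 < D) (hr : 0 ≤ r)
    (hD2 : c 0^2 + c 1^2 = D^2) (hk : 2*k = 1 + D^2 - r^2) (ht : t^2 = D^2 - k^2) :
    (!₂[(k*c 0 - t*c 1)/D^2, (k*c 1 + t*c 0)/D^2] : E2) ∈ sphere c r ∩ sphere (0 : E2) 1 := by
  have hne : (D:ℝ)^2 ≠ 0 := by positivity
  constructor
  · rw [memsph _ c r hr]
    show ((k*c 0 - t*c 1)/D^2 - c 0)^2 + ((k*c 1 + t*c 0)/D^2 - c 1)^2 = r^2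
    have e1 : (k*c 0 - t*c 1)/D^2 - c 0 = (k*c 0 - t*c 1 - c 0*D^2)/D^2 := by
      field_simp
    have e2 : (k*c 1 + t*c 0)/D^2 - c 1 = (k*c 1 + t*c 0 - c 1*D^2)/D^2 := by
      field_simp
    rw [e1, e2, div_pow, div_pow, ← add_div, div_eq_iff (by positivity)]
    linear_combination ((k - D^2)^2 + t^2) * hD2 + D^2 * ht - (D^2)^2 * hk
  · rw [memsph0]
    show ((k*c 0 - t*c 1)/D^2)^2 + ((k*c 1 + t*c 0)/D^2)^2 = 1
    rw [div_pow, div_pow, ← add_div, div_eq_iff (by positivity)]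
    linear_combination (k^2 + t^2) * hD2 + D^2 * ht

theorem two_inter (c : E2) (D r : ℝ) (hD : 0 < D) (hr : 0 < r) (hc : ‖c‖ = D)
    (h1 : 1 - r < D) (h2 : D < 1 + r) (h3 : r - 1 < D) :
    ∃ x y : E2, x ≠ y ∧ sphere c r ∩ sphere (0 : E2) 1 = {x, y} := by
  have hne : (D:ℝ)^2 ≠ 0 := by positivity
  have hD2 : c 0^2 + c 1^2 = D^2 := by rw [normsq2, hc]
  set k : ℝ := (1 + D^2 - r^2)/2 with hkdef
  have hk : 2*k = 1 + D^2 - r^2 := by rw [hkdef]; ring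
  have hprod : 0 < (r + D - 1)*(r + 1 - D)*((1 + D - r)*(1 + D + r)) := by
    apply mul_pos (mul_pos (by linarith) (by linarith))
    exact mul_pos (by linarith) (by linarith)
  have hk2 : k^2 < D^2 := by nlinarith [hprod]
  set s : ℝ := Real.sqrt (D^2 - k^2) with hsdef
  have hs : 0 < s := Real.sqrt_pos.mpr (by linarith)
  have hs2 : s^2 = D^2 - k^2 := Real.sq_sqrt (by linarith)
  have hptseq : (!₂[(k*c 0 + s*c 1)/D^2, (k*c 1 - s*c 0)/D^2] : E2)
      = (!₂[(k*c 0 - (-s)*c 1)/D^2, (k*c 1 + (-s)*c 0)/D^2] : E2) := by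
    ext i
    fin_cases i
    · show (k*c 0 + s*c 1)/D^2 = (k*c 0 - (-s)*c 1)/D^2
      ring
    · show (k*c 1 - s*c 0)/D^2 = (k*c 1 + (-s)*c 0)/D^2
      ring
  refine ⟨!₂[(k*c 0 - s*c 1)/D^2, (k*c 1 + s*c 0)/D^2],
          !₂[(k*c 0 + s*c 1)/D^2, (k*c 1 - s*c 0)/D^2], ?_, ?_⟩
  · intro h
    have h0 := congrArg (fun v : E2 => v 0) h
    have h1' := congrArg (fun v : E2 => v 1) h
    simp only [PiLp.toLp_apply, Matrix.cons_val_zero, Matrix.cons_val_one, Matrix.head_cons] at h0 h1'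
    have hc1 : c 1 = 0 := by
      have hz : (k*c 0 - s*c 1) - (k*c 0 + s*c 1) = 0 := by
        have := sub_eq_zero.mpr h0
        rw [div_sub_div_same] at this
        exact (div_eq_zero_iff.mp this).resolve_right hne
      rcases mul_eq_zero.mp (show s * c 1 = 0 by linarith) with hh | hh
      · exact absurd hh hs.ne'
      · exact hh
    have hc0 : c 0 = 0 := by
      have hz : (k*c 1 + s*c 0) - (k*c 1 - s*c 0) = 0 := by
        have := sub_eq_zero.mpr h1'
        rw [div_sub_div_same] at this
        exact (div_eq_zero_iff.mp this).resolve_right hne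
      rcases mul_eq_zero.mp (show s * c 0 = 0 by linarith) with hh | hh
      · exact absurd hh hs.ne'
      · exact hh
    rw [hc0, hc1] at hD2
    nlinarith
  · ext z
    simp only [Set.mem_insert_iff, Set.mem_singleton_iff]
    constructor
    · rintro ⟨hz1, hz2⟩
      rw [memsph z c r hr.le] at hz1
      rw [memsph0] at hz2
      have hk' : z 0 * c 0 + z 1 * c 1 = k := by nlinarith
      have ht2 : (z 1 * c 0 - z 0 * c 1)^2 = D^2 - k^2 :=  by
        linear_combination (c 0^2 + c 1^2) * hz2 + hD2 - (z 0*c 0 + z 1*c 1 + k) * hk'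
      have hcases : (z 1 * c 0 - z 0 * c 1 - s) * (z 1 * c 0 - z 0 * c 1 + s) = 0 := by
        linear_combination ht2 - hs2
      rcases mul_eq_zero.mp hcases with hca | hca
      · left
        have hts : z 1 * c 0 - z 0 * c 1 = s := by linarith
        ext i
        fin_cases i
        · show z 0 = (k*c 0 - s*c 1)/D^2
          rw [eq_div_iff hne]
          linear_combination c 0 * hk' - z 0 * hD2 - c 1 * hts
        · show z 1 = (k*c 1 + s*c 0)/D^2
          rw [eq_div_iff hne]
          linear_combination c 1 * hk' - z 1 * hD2 + c 0 * hts
      · right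
        have hts : z 1 * c 0 - z 0 * c 1 = -s := by linarith
        ext i
        fin_cases i
        · show z 0 = (k*c 0 + s*c 1)/D^2
          rw [eq_div_iff hne]
          linear_combination c 0 * hk' - z 0 * hD2 - c 1 * hts
        · show z 1 = (k*c 1 - s*c 0)/D^2
          rw [eq_div_iff hne]
          linear_combination c 1 * hk' - z 1 * hD2 + c 0 * hts
    · rintro (hz | hz)
      · rw [hz]
        exact mem_both c D r k s hD hr.le hD2 hk hs2
      · rw [hz, hptseq]
        exact mem_both c D r k (-s) hD hr.le hD2 hk (by linear_combination hs2)

open Real Metric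

/-- Inverse hyperbolic tangent. -/
noncomputable def artanh (x : ℝ) : ℝ := (1 / 2) * Real.log ((1 + x) / (1 - x))

/-- Classification of generalized cycles meeting a fixed circle at a fixed angle in the
Poincaré disk, and strict monotonicity plus continuity of the geodesic curvature. -/
theorem stmt_11 (r₀ Θ : ℝ) (hr₀ : 0 < r₀) (hr₀1 : r₀ < 1) (hΘ : Θ ∈ Set.Ico 0 π) :
    let d : ℝ → ℝ := fun r => Real.sqrt (r₀ ^ 2 + r ^ 2 + 2 * r₀ * r * Real.cos Θ)
    let g : ℝ → ℝ := fun r =>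
      if d r + r < 1 then
        Real.cosh (_root_.artanh (d r + r) - _root_.artanh (d r - r)) /
          Real.sinh (_root_.artanh (d r + r) - _root_.artanh (d r - r))
      else if d r + r = 1 then 1
      else (1 + r ^ 2 - d r ^ 2) / (2 * r)
    (∀ r : ℝ, 0 < r → ∀ c : EuclideanSpace ℝ (Fin 2), ‖c‖ = d r →
      ((closedBall c r ⊆ ball (0 : EuclideanSpace ℝ (Fin 2)) 1 ↔ d r < 1 - r) ∧
        ((∃ x, sphere c r ∩ sphere (0 : EuclideanSpace ℝ (Fin 2)) 1 = {x}) ↔ d r = 1 - r) ∧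
        ((∃ x y, x ≠ y ∧ sphere c r ∩ sphere (0 : EuclideanSpace ℝ (Fin 2)) 1 = {x, y}) ↔
          1 - r < d r ∧ d r < 1 + r))) ∧
      ContinuousOn g (Set.Ioi 0) ∧ StrictAntiOn g (Set.Ioi 0) := by
  intro d g
  have hc1 : Real.cos Θ ≤ 1 := Real.cos_le_one Θ
  have hcm1 : -1 < Real.cos Θ := by
    have h := Real.strictAntiOn_cos ⟨hΘ.1, hΘ.2.le⟩ ⟨le_of_lt Real.pi_pos, le_refl π⟩ hΘ.2
    rwa [Real.cos_pi] at h
  have hQpos : ∀ r : ℝ, 0 < r → 0 < r₀ ^ 2 + r ^ 2 + 2 * r₀ * r * Real.cos Θ := by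
    intro r hr
    nlinarith [mul_pos (mul_pos hr₀ hr) (show (0:ℝ) < 1 + Real.cos Θ by linarith),
      sq_nonneg (r₀ - r)]
  have hdpos : ∀ r : ℝ, 0 < r → 0 < d r := fun r hr => Real.sqrt_pos.mpr (hQpos r hr)
  have hd2 : ∀ r : ℝ, 0 < r → d r ^ 2 = r₀ ^ 2 + r ^ 2 + 2 * r₀ * r * Real.cos Θ :=
    fun r hr => Real.sq_sqrt (hQpos r hr).le
  have hdlt : ∀ r : ℝ, 0 < r → d r < 1 + r := by
    intro r hr
    rw [show d r = Real.sqrt (r₀ ^ 2 + r ^ 2 + 2 * r₀ * r * Real.cos Θ) from rfl,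
      Real.sqrt_lt' (by linarith)]
    have hx : r₀ * Real.cos Θ ≤ r₀ * 1 := mul_le_mul_of_nonneg_left hc1 hr₀.le
    have hpr : 0 < 2*r*(1 - r₀*Real.cos Θ) := mul_pos (by linarith) (by nlinarith)
    nlinarith [hpr]
  have hdgt : ∀ r : ℝ, 0 < r → r - 1 < d r := by
    intro r hr
    rcases le_or_gt r 1 with h | h
    · have := hdpos r hr; linarith
    · rw [show d r = Real.sqrt (r₀ ^ 2 + r ^ 2 + 2 * r₀ * r * Real.cos Θ) from rfl]
      refine (Real.lt_sqrt (by linarith)).mpr ?_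
      have ha : 0 < 2*r₀*r*(Real.cos Θ + 1) := mul_pos (by positivity) (by linarith)
      have hb : 0 < (1 - r₀)*(2*r - 1 - r₀) := mul_pos (by linarith) (by linarith)
      nlinarith [ha, hb]
  have hg : ∀ r ∈ Set.Ioi (0:ℝ), g r = (1 - r₀^2)/(2*r) - r₀ * Real.cos Θ := by
    intro r hr
    rw [Set.mem_Ioi] at hr
    have hD := hdpos r hr
    have hd2r := hd2 r hr
    have hRHS : (1 - r₀^2)/(2*r) - r₀ * Real.cos Θ = (1 - d r^2 + r^2)/(2*r) := by
      rw [hd2r]; field_simp; ring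
    show (if d r + r < 1 then
        Real.cosh (_root_.artanh (d r + r) - _root_.artanh (d r - r)) /
          Real.sinh (_root_.artanh (d r + r) - _root_.artanh (d r - r))
      else if d r + r = 1 then 1
      else (1 + r ^ 2 - d r ^ 2) / (2 * r)) = (1 - r₀^2)/(2*r) - r₀ * Real.cos Θ
    rcases lt_trichotomy (d r + r) 1 with hlt | heq | hgt
    · rw [if_pos hlt]
      set a := d r + r with ha
      set b := d r - r with hb
      have har : r < 1 := by linarith
      have h1a : 0 < 1 - a := by linarith
      have h1a' : 0 < 1 + a := by simp only [ha]; linarith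
      have h1b : 0 < 1 - b := by simp only [hb]; linarith
      have h1b' : 0 < 1 + b := by simp only [hb]; linarith
      set A := (1 + a)/(1 - a) with hA
      set B := (1 + b)/(1 - b) with hB
      have hApos : 0 < A := div_pos h1a' h1a
      have hBpos : 0 < B := div_pos h1b' h1b
      have hABgt : B < A := by
        rw [hB, hA, div_lt_div_iff₀ h1b h1a]
        have : b < a := by rw [ha, hb]; linarith
        nlinarith
      set t := _root_.artanh a - _root_.artanh b with ht
      set u := Real.exp t with hu
      have hupos : 0 < u := Real.exp_pos t
      have hu2 : u^2 = A / B := by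
        have htt : t + t = Real.log A - Real.log B := by
          rw [ht]
          unfold _root_.artanh
          rw [← hA, ← hB]
          ring
        rw [hu, pow_two, ← Real.exp_add, htt, Real.exp_sub, Real.exp_log hApos,
          Real.exp_log hBpos]
      have hABone : 1 < A / B := (one_lt_div hBpos).mpr hABgt
      have hu1 : 1 < u := by nlinarith [hu2, hABone, hupos]
      have huinv : u⁻¹ < 1 := inv_lt_one_of_one_lt₀ hu1
      have husub : 0 < u - u⁻¹ := by linarith
      have hu2ne : (0:ℝ) < u^2 - 1 := by nlinarith
      rw [Real.cosh_eq, Real.sinh_eq, Real.exp_neg, ← hu]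
      have hne2 : (-1 + u^2) ≠ 0 := by nlinarith
      have hstep : (u + u⁻¹)/2 / ((u - u⁻¹)/2) = (u^2 + 1)/(u^2 - 1) := by
        rw [div_div_div_cancel_right₀ (two_ne_zero) (u + u⁻¹) (u - u⁻¹),
          div_eq_div_iff husub.ne' hu2ne.ne']
        field_simp [hupos.ne']
      rw [hstep, hu2]
      have hApB : A + B = 2*(1 - a*b)/((1-a)*(1-b)) := by
        rw [hA, hB]
        field_simp
        ring
      have hAmB : A - B = 2*(a - b)/((1-a)*(1-b)) := by
        rw [hA, hB]
        field_simp
        ring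
      have habne : a - b ≠ 0 := by rw [ha, hb]; intro hcc; nlinarith
      have hMne : (1-a)*(1-b) ≠ 0 := by positivity
      have hfrac : (A/B + 1)/(A/B - 1) = (1 - a*b)/(a - b) := by
        have e1 : A/B + 1 = (A + B)/B := by
          rw [add_div, div_self hBpos.ne']
        have e2 : A/B - 1 = (A - B)/B := by
          rw [← div_sub_div_same, div_self hBpos.ne']
        rw [e1, e2, div_div_div_cancel_right₀ hBpos.ne', hApB, hAmB,
          div_div_div_cancel_right₀ hMne, mul_div_mul_left _ _ (two_ne_zero)]
      rw [hfrac, hRHS, ha, hb, div_eq_div_iff (by simpa [ha, hb] using habne) (by positivity)]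
      ring
    · rw [if_neg (by rw [heq]; exact lt_irrefl 1), if_pos heq]
      have hdr : d r = 1 - r := by linarith
      have hh : d r ^ 2 = (1 - r)^2 := by rw [hdr]
      rw [hRHS, eq_div_iff (by positivity)]
      nlinarith [hh]
    · rw [if_neg (by linarith), if_neg (by linarith)]
      rw [hRHS]
      ring
  refine ⟨?_, ?_, ?_⟩
  · intro r hr c hc
    have hD := hdpos r hr
    have h2 := hdlt r hr
    have h3 := hdgt r hr
    refine ⟨?_, ?_, ?_⟩
    · constructor
      · intro h
        have hyc : (c + (r / d r) • c) ∈ closedBall c r := by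
          rw [mem_closedBall, dist_eq_norm, add_sub_cancel_left, norm_smul, hc,
            Real.norm_eq_abs, abs_of_nonneg (div_nonneg hr.le hD.le),
            div_mul_cancel₀ _ hD.ne']
        have hmem := h hyc
        rw [mem_ball, dist_zero_right] at hmem
        have hn : ‖c + (r / d r) • c‖ = d r + r := by
          have e : c + (r / d r) • c = (1 + r / d r) • c := by rw [add_smul, one_smul]
          rw [e, norm_smul, hc, Real.norm_eq_abs, abs_of_nonneg (by positivity)]
          field_simp
        rw [hn] at hmem
        linarith
      · intro h x hx
        rw [mem_closedBall] at hx
        rw [mem_ball]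
        calc dist x 0 ≤ dist x c + dist c 0 := dist_triangle _ _ _
          _ ≤ r + d r := by rw [dist_zero_right, hc]; linarith
          _ < 1 := by linarith
    · constructor
      · rintro ⟨x, hx⟩
        by_contra hne
        rcases lt_trichotomy (d r + r) 1 with hlt | heq | hgt
        · have hxm : x ∈ sphere c r ∩ sphere (0 : EuclideanSpace ℝ (Fin 2)) 1 := by
            rw [hx]; exact rfl
          obtain ⟨hx1, hx2⟩ := hxm
          rw [mem_sphere] at hx1 hx2
          have htr := dist_triangle x c (0 : EuclideanSpace ℝ (Fin 2))
          rw [hx1, hx2, dist_zero_right, hc] at htr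
          linarith
        · exact hne (by linarith)
        · obtain ⟨p, q, hpq, hset⟩ := two_inter c (d r) r hD hr hc (by linarith) h2 h3
          rw [hx] at hset
          have hp : p = x := by
            have : p ∈ ({x} : Set (EuclideanSpace ℝ (Fin 2))) := by
              rw [hset]; exact Set.mem_insert p {q}
            exact this
          have hq : q = x := by
            have : q ∈ ({x} : Set (EuclideanSpace ℝ (Fin 2))) := by
              rw [hset]; exact Set.mem_insert_of_mem p rfl
            exact this
          exact hpq (hp.trans hq.symm)
      · intro h
        exact ⟨(d r)⁻¹ • c, tangent_inter c (d r) r hD hr hc h⟩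
    · constructor
      · rintro ⟨x, y, hxy, hset⟩
        refine ⟨?_, h2⟩
        by_contra hle
        push_neg at hle
        rcases eq_or_lt_of_le hle with heq | hlt
        · have hsing := tangent_inter c (d r) r hD hr hc heq
          rw [hset] at hsing
          have hx' : x = (d r)⁻¹ • c := by
            have : x ∈ ({(d r)⁻¹ • c} : Set (EuclideanSpace ℝ (Fin 2))) := by
              rw [← hsing]; exact Set.mem_insert x {y}
            exact this
          have hy' : y = (d r)⁻¹ • c := by
            have : y ∈ ({(d r)⁻¹ • c} : Set (EuclideanSpace ℝ (Fin 2))) := by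
              rw [← hsing]; exact Set.mem_insert_of_mem x rfl
            exact this
          exact hxy (hx'.trans hy'.symm)
        · have hxm : x ∈ sphere c r ∩ sphere (0 : EuclideanSpace ℝ (Fin 2)) 1 := by
            rw [hset]; exact Set.mem_insert x {y}
          obtain ⟨hx1, hx2⟩ := hxm
          rw [mem_sphere] at hx1 hx2
          have htr := dist_triangle x c (0 : EuclideanSpace ℝ (Fin 2))
          rw [hx1, hx2, dist_zero_right, hc] at htr
          linarith
      · rintro ⟨hga, hgb⟩
        exact two_inter c (d r) r hD hr hc hga hgb h3
  · have hcont : ContinuousOn (fun r : ℝ => (1 - r₀^2)/(2*r) - r₀ * Real.cos Θ)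
        (Set.Ioi 0) := by
      apply ContinuousOn.sub _ continuousOn_const
      exact ContinuousOn.div continuousOn_const (by fun_prop)
        (fun x hx => by have : (0:ℝ) < x := hx; positivity)
    exact hcont.congr hg
  · intro x hx y hy hxy
    rw [hg x hx, hg y hy]
    have h1 : (0:ℝ) < 1 - r₀^2 := by nlinarith
    have hx0 : (0:ℝ) < x := hx
    have h2' : (1 - r₀^2)/(2*y) < (1 - r₀^2)/(2*x) :=
      div_lt_div_of_pos_left h1 (by linarith) (by linarith)
    linarith
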